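/- Let b = b₁ ⊕ b₂ be a direct sum of closed subspaces of a Banach Lie-Poisson space with projectors R₁, R₂ (R₁+R₂ = id, R₁R₂ = R₂R₁ = 0). If im R₁* and im R₂* are Banach Lie subalgebras of b*, then the bracket {f,g}_R(b) := ⟨[R*Df(b), Dg(b)] + [Df(b), R*Dg(b)], b⟩ with R = (R₁ − R₂)/2 satisfies {f,g}_R(b₁+b₂) = ⟨[R₁*Df, R₁*Dg], b₁⟩ − ⟨[R₂*Df, R₂*Dg], b₂⟩, i.e., it is the product of the coinduced bracket on b₁ with the negative of the coinduced bracket on b₂. -/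

import Mathlib

/-- For a splitting `E = im R₁ ⊕ im R₂` by complementary projectors whose dual images are
Lie subalgebras of the dual Lie algebra `(E*, br)`, the `R`-bracket with
`R = (R₁ - R₂)/2` is the difference of the two coinduced brackets:
`{f,g}_R(b) = ⟨[R₁*Df, R₁*Dg], R₁ b⟩ - ⟨[R₂*Df, R₂*Dg], R₂ b⟩`. -/
theorem stmt6
    {E : Type*} [NormedAddCommGroup E] [NormedSpace ℝ E]
    (br : StrongDual ℝ E →ₗ[ℝ] StrongDual ℝ E →ₗ[ℝ] StrongDual ℝ E)
    (R₁ R₂ : E →L[ℝ] E)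
    (hsum : R₁ + R₂ = ContinuousLinearMap.id ℝ E)
    (h12 : R₁.comp R₂ = 0) (h21 : R₂.comp R₁ = 0)
    (hsub1 : ∀ x y : StrongDual ℝ E, ∃ z : StrongDual ℝ E, br (x.comp R₁) (y.comp R₁) = z.comp R₁)
    (hsub2 : ∀ x y : StrongDual ℝ E, ∃ z : StrongDual ℝ E, br (x.comp R₂) (y.comp R₂) = z.comp R₂)
    (f g : E → ℝ) (hf : Differentiable ℝ f) (hg : Differentiable ℝ g) :
    ∀ b : E,
      br ((fderiv ℝ f b).comp ((1 / 2 : ℝ) • (R₁ - R₂))) (fderiv ℝ g b) b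
        + br (fderiv ℝ f b) ((fderiv ℝ g b).comp ((1 / 2 : ℝ) • (R₁ - R₂))) b
      = br ((fderiv ℝ f b).comp R₁) ((fderiv ℝ g b).comp R₁) (R₁ b)
        - br ((fderiv ℝ f b).comp R₂) ((fderiv ℝ g b).comp R₂) (R₂ b) := by
  intro b
  obtain ⟨z1, hz1⟩ := hsub1 (fderiv ℝ f b) (fderiv ℝ g b)
  obtain ⟨z2, hz2⟩ := hsub2 (fderiv ℝ f b) (fderiv ℝ g b)
  have hR1 : ∀ v : E, R₁ (R₁ v) = R₁ v := by
    intro v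
    have h := congrArg (fun T : E →L[ℝ] E => R₁ (T v)) hsum
    have h12v : R₁ (R₂ v) = 0 := by simpa using DFunLike.congr_fun h12 v
    simpa [map_add, h12v] using h
  have hR2 : ∀ v : E, R₂ (R₂ v) = R₂ v := by
    intro v
    have h := congrArg (fun T : E →L[ℝ] E => R₂ (T v)) hsum
    have h21v : R₂ (R₁ v) = 0 := by simpa using DFunLike.congr_fun h21 v
    simpa [map_add, h21v] using h
  have key : ∀ x : StrongDual ℝ E,
      x.comp ((1 / 2 : ℝ) • (R₁ - R₂)) = (1 / 2 : ℝ) • x.comp R₁ - (1 / 2 : ℝ) • x.comp R₂ := by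
    intro x
    ext v
    simp [mul_sub]
  rw [key, key]
  set a := (fderiv ℝ f b).comp R₁ with ha
  set a' := (fderiv ℝ f b).comp R₂ with ha'
  set c := (fderiv ℝ g b).comp R₁ with hc
  set c' := (fderiv ℝ g b).comp R₂ with hc'
  have hF : fderiv ℝ f b = a + a' := by
    ext v
    have hv : R₁ v + R₂ v = v := by simpa using DFunLike.congr_fun hsum v
    simp [ha, ha', ← map_add, hv]
  have hG : fderiv ℝ g b = c + c' := by
    ext v
    have hv : R₁ v + R₂ v = v := by simpa using DFunLike.congr_fun hsum v
    simp [hc, hc', ← map_add, hv]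
  rw [hF, hG]
  have hv : R₁ b + R₂ b = b := by simpa using DFunLike.congr_fun hsum b
  have E1 : br a c b = br a c (R₁ b) := by
    rw [hz1]
    simp [ContinuousLinearMap.comp_apply, hR1 b]
  have E2 : br a' c' b = br a' c' (R₂ b) := by
    rw [hz2]
    simp [ContinuousLinearMap.comp_apply, hR2 b]
  simp only [map_add, map_sub, map_smul, LinearMap.add_apply, LinearMap.sub_apply,
    LinearMap.smul_apply, ContinuousLinearMap.add_apply, ContinuousLinearMap.sub_apply,
    ContinuousLinearMap.coe_smul', Pi.smul_apply, smul_eq_mul]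
  rw [E1, E2]
  ring
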